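/- If q is even, then the metric dimension of the generalized quadrangle W(q) is at most 8q. -/

import Mathlib

open Set

/-- The bipartite point-line incidence graph of an incidence relation `I`. -/
def IncGraph {Pt Ln : Type*} (I : Pt → Ln → Prop) : SimpleGraph (Pt ⊕ Ln) where
  Adj x y := (∃ p l, x = Sum.inl p ∧ y = Sum.inr l ∧ I p l) ∨
             (∃ p l, x = Sum.inr l ∧ y = Sum.inl p ∧ I p l)
  symm := by
    constructor
    rintro x y (⟨p, l, hx, hy, h⟩ | ⟨p, l, hx, hy, h⟩)
    · exact Or.inr ⟨p, l, hy, hx, h⟩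
    · exact Or.inl ⟨p, l, hy, hx, h⟩
  loopless := by
    constructor
    rintro x (⟨p, l, hx, hy, h⟩ | ⟨p, l, hx, hy, h⟩) <;> subst hx <;> simp_all

/-- A set of vertices is a resolving set if every vertex is determined
by its distances to the elements of `S`. -/
def IsResolvingSet {V : Type*} (G : SimpleGraph V) (S : Set V) : Prop :=
  ∀ x y : V, (∀ s ∈ S, G.dist x s = G.dist y s) → x = y

noncomputable section

/-- The standard symplectic (alternating, nondegenerate) form on `F_q⁴`, defining the
null polarity whose self-conjugate lines are the lines of `W(q)`. -/
def symp {p n : ℕ} [Fact p.Prime] (x y : Fin 4 → GaloisField p n) : GaloisField p n :=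
  x 0 * y 1 - x 1 * y 0 + x 2 * y 3 - x 3 * y 2

/-- Points of `W(q)`: all points of `PG(3,q)`, `q = p^n`. -/
abbrev WPoint (p n : ℕ) [Fact p.Prime] :=
  Projectivization (GaloisField p n) (Fin 4 → GaloisField p n)

/-- Lines of `W(q)`: the totally isotropic (self-conjugate) projective lines, i.e. the
`2`-dimensional subspaces on which the symplectic form vanishes. -/
def WLine (p n : ℕ) [Fact p.Prime] :=
  {W : Submodule (GaloisField p n) (Fin 4 → GaloisField p n) //
    Module.finrank (GaloisField p n) W = 2 ∧ ∀ x ∈ W, ∀ y ∈ W, symp x y = 0}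

/-- Incidence in `W(q)`. -/
def wIncid {p n : ℕ} [Fact p.Prime] (P : WPoint p n) (l : WLine p n) : Prop :=
  P.rep ∈ l.1

set_option maxHeartbeats 800000
namespace WqAux
variable {n : ℕ}
abbrev KK (n : ℕ) := GaloisField 2 n
abbrev VV (n : ℕ) := Fin 4 → KK n
lemma sympc (x y : VV n) :
    symp x y = x 0 * y 1 + x 1 * y 0 + x 2 * y 3 + x 3 * y 2 := by
  have h : ∀ a b : KK n, a - b = a + b := fun a b => by
    rw [sub_eq_add_neg, CharTwo.neg_eq]
  simp only [symp, h]
lemma symp_comm (x y : VV n) : symp x y = symp y x := by simp only [sympc]; ring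
lemma symp_self (x : VV n) : symp x x = 0 := by simp only [symp]; ring
def Ev (j : Fin 4) : VV n := fun i => if i = j then 1 else 0
lemma Ev_ne_zero (j : Fin 4) : (Ev j : VV n) ≠ 0 := by
  intro h; have := congrFun h j; simp [Ev] at this
lemma symp_Ev0 (v : VV n) : symp v (Ev 0) = v 1 := by simp [sympc, Ev]
lemma symp_Ev1 (v : VV n) : symp v (Ev 1) = v 0 := by simp [sympc, Ev]
lemma symp_Ev2 (v : VV n) : symp v (Ev 2) = v 3 := by simp [sympc, Ev]
lemma symp_Ev3 (v : VV n) : symp v (Ev 3) = v 2 := by simp [sympc, Ev]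

lemma symp_zero_right (x : VV n) : symp x 0 = 0 := by simp [sympc]
lemma symp_zero_left (x : VV n) : symp 0 x = 0 := by simp [sympc]
lemma symp_add_left (x y z : VV n) : symp (x + y) z = symp x z + symp y z := by
  simp only [sympc, Pi.add_apply]; ring
lemma symp_add_right (x y z : VV n) : symp x (y + z) = symp x y + symp x z := by
  simp only [sympc, Pi.add_apply]; ring
lemma symp_smul_left (c : KK n) (x z : VV n) : symp (c • x) z = c * symp x z := by
  simp only [sympc, Pi.smul_apply, smul_eq_mul]; ring
lemma symp_smul_right (c : KK n) (x z : VV n) : symp x (c • z) = c * symp x z := by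
  simp only [sympc, Pi.smul_apply, smul_eq_mul]; ring
lemma vec_decomp (w : VV n) :
    w = w 0 • Ev 0 + w 1 • Ev 1 + w 2 • Ev 2 + w 3 • Ev 3 := by
  funext i
  fin_cases i <;> simp [Ev]

-- Part B
open Module Submodule

/-- symp as a bilinear form -/
def B (n : ℕ) : LinearMap.BilinForm (KK n) (VV n) :=
  LinearMap.mk₂ (KK n) symp
    (fun x y z => by simp only [sympc, Pi.add_apply]; ring)
    (fun c x z => by simp only [sympc, Pi.smul_apply, smul_eq_mul]; ring)
    (fun x y z => by simp only [sympc, Pi.add_apply]; ring)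
    (fun c x z => by simp only [sympc, Pi.smul_apply, smul_eq_mul]; ring)

lemma B_apply (x y : VV n) : B n x y = symp x y := rfl

lemma B_refl : (B n).IsRefl := fun x y h => by
  rw [B_apply] at *
  rw [symp_comm]; exact h

lemma B_nondeg : (B n).Nondegenerate := by
  refine (LinearMap.IsRefl.nondegenerate_iff_separatingLeft B_refl).2 ?_
  intro v h
  have h0 : v 0 = 0 := by have := h (Ev 1); rwa [B_apply, symp_Ev1] at this
  have h1 : v 1 = 0 := by have := h (Ev 0); rwa [B_apply, symp_Ev0] at this
  have h2 : v 2 = 0 := by have := h (Ev 3); rwa [B_apply, symp_Ev3] at this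
  have h3 : v 3 = 0 := by have := h (Ev 2); rwa [B_apply, symp_Ev2] at this
  funext i
  fin_cases i <;> assumption

lemma finrank_VV : finrank (KK n) (VV n) = 4 := by
  simp [Module.finrank_pi]

lemma finrank_orth (w : Submodule (KK n) (VV n)) :
    finrank (KK n) ((B n).orthogonal w) = 4 - finrank (KK n) w := by
  rw [LinearMap.BilinForm.finrank_orthogonal B_nondeg, finrank_VV]

lemma orth_eq (w : Submodule (KK n) (VV n)) (h2 : finrank (KK n) w = 2)
    (hiso : ∀ x ∈ w, ∀ y ∈ w, symp x y = 0) : (B n).orthogonal w = w := by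
  have hle : w ≤ (B n).orthogonal w := by
    intro x hx
    rw [LinearMap.BilinForm.mem_orthogonal_iff]
    intro m hm
    exact hiso m hm x hx
  refine (Submodule.eq_of_le_of_finrank_le hle ?_).symm
  rw [finrank_orth, h2]

lemma mem_of_perp_all (w : Submodule (KK n) (VV n)) (h2 : finrank (KK n) w = 2)
    (hiso : ∀ x ∈ w, ∀ y ∈ w, symp x y = 0) (v : VV n)
    (hv : ∀ x ∈ w, symp x v = 0) : v ∈ w := by
  rw [← orth_eq w h2 hiso, LinearMap.BilinForm.mem_orthogonal_iff]
  intro m hm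
  show B n m v = 0
  rw [B_apply]
  exact hv m hm

lemma exists_ne_zero_of_finrank_pos {w : Submodule (KK n) (VV n)}
    (h : 0 < finrank (KK n) w) : ∃ z ∈ w, z ≠ 0 := by
  by_contra hc
  push_neg at hc
  have : w = ⊥ := by rw [Submodule.eq_bot_iff]; exact hc
  rw [this, finrank_bot] at h
  omega

lemma finrank_span_singleton_le (w : VV n) :
    finrank (KK n) (span (KK n) ({w} : Set (VV n))) ≤ 1 := by
  rcases eq_or_ne w 0 with rfl | hw
  · rw [Submodule.span_zero_singleton]
    simp
  · rw [finrank_span_singleton hw]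

lemma exists_perp_in (u : Submodule (KK n) (VV n)) (hu : finrank (KK n) u = 2)
    (w : VV n) : ∃ z ∈ u, z ≠ 0 ∧ symp z w = 0 := by
  classical
  have hw : u ⊓ (B n).orthogonal (span (KK n) {w}) ≠ ⊥ := by
    intro hbot
    have h1 := Submodule.finrank_sup_add_finrank_inf_eq u ((B n).orthogonal (span (KK n) {w}))
    rw [hbot, finrank_bot, finrank_orth] at h1
    have h2 : finrank (KK n) (span (KK n) ({w} : Set (VV n))) ≤ 1 :=
      finrank_span_singleton_le w
    have h3 := Submodule.finrank_le (u ⊔ (B n).orthogonal (span (KK n) {w}))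
    rw [finrank_VV] at h3
    omega
  obtain ⟨z, hz, hzne⟩ := Submodule.exists_mem_ne_zero_of_ne_bot hw
  refine ⟨z, hz.1, hzne, ?_⟩
  have h4 : B n w z = 0 := (LinearMap.BilinForm.mem_orthogonal_iff.mp hz.2) w
    (Submodule.mem_span_singleton_self w)
  rw [B_apply] at h4
  rw [symp_comm]
  exact h4

lemma span_pair_le {a b : VV n} {u : Submodule (KK n) (VV n)} (ha : a ∈ u) (hb : b ∈ u) :
    span (KK n) {a, b} ≤ u := by
  rw [span_le]
  rintro x (rfl | rfl)
  · exact ha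
  · exact hb

lemma finrank_span_pair {a b : VV n} (h : LinearIndependent (KK n) ![a, b]) :
    finrank (KK n) (span (KK n) {a, b}) = 2 := by
  have hr : Set.range ![a, b] = {a, b} := by
    simp only [Matrix.range_cons, Matrix.range_empty, Set.union_empty, Set.union_singleton]
    exact Set.pair_comm b a
  rw [← hr, finrank_span_eq_card h, Fintype.card_fin]

lemma finrank_span_pair_le (a b : VV n) :
    finrank (KK n) (span (KK n) {a, b}) ≤ 2 := by
  have h1 : ({a, b} : Set (VV n)) = {a} ∪ {b} := rfl
  rw [h1, Submodule.span_union]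
  have := Submodule.finrank_sup_add_finrank_inf_eq
    (span (KK n) ({a} : Set (VV n))) (span (KK n) ({b} : Set (VV n)))
  have ha := finrank_span_singleton_le (n := n) a
  have hb := finrank_span_singleton_le (n := n) b
  omega

lemma indep_pair {a b : VV n} (ha : a ≠ 0) (hb : ∀ c : KK n, b ≠ c • a) :
    LinearIndependent (KK n) ![a, b] := by
  rw [LinearIndependent.pair_iff]
  intro s t hst
  rcases eq_or_ne t 0 with rfl | ht
  · rw [zero_smul, add_zero, smul_eq_zero] at hst
    rcases hst with h | h
    · exact ⟨h, rfl⟩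
    · exact absurd h ha
  · exfalso
    apply hb (-s / t)
    have h' : t • b = (-s) • a := by
      rw [neg_smul, ← eq_neg_of_add_eq_zero_right hst]
    calc b = t⁻¹ • (t • b) := by rw [smul_smul, inv_mul_cancel₀ ht, one_smul]
      _ = t⁻¹ • ((-s) • a) := by rw [h']
      _ = (-s / t) • a := by rw [smul_smul]; ring_nf


open Projectivization

/-- make a W-line from a spanning isotropic pair -/
lemma span_pair_iso {a b : VV n} (hiso : symp a b = 0) :
    ∀ x ∈ span (KK n) {a, b}, ∀ y ∈ span (KK n) {a, b}, symp x y = 0 := by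
  intro x hx y hy
  rw [Submodule.mem_span_pair] at hx hy
  obtain ⟨s, t, rfl⟩ := hx
  obtain ⟨s', t', rfl⟩ := hy
  simp only [symp_add_left, symp_add_right, symp_smul_left, symp_smul_right]
  rw [symp_self, symp_self, hiso, symp_comm b a, hiso]
  ring

def mkL (a b : VV n) (hind : LinearIndependent (KK n) ![a, b]) (hiso : symp a b = 0) :
    WLine 2 n :=
  ⟨span (KK n) {a, b}, finrank_span_pair hind, span_pair_iso hiso⟩

lemma mkL_carrier (a b : VV n) (hind) (hiso) : (mkL a b hind hiso).1 = span (KK n) {a, b} := rfl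

lemma mem_mkL_left (a b : VV n) (hind) (hiso) : a ∈ (mkL a b hind hiso).1 :=
  Submodule.subset_span (Set.mem_insert _ _)

lemma mem_mkL_right (a b : VV n) (hind) (hiso) : b ∈ (mkL a b hind hiso).1 :=
  Submodule.subset_span (Set.mem_insert_of_mem _ rfl)

/-- representative of mk is a nonzero multiple -/
lemma rep_mk_smul (v : VV n) (hv : v ≠ 0) :
    ∃ c : KK n, c ≠ 0 ∧ (Projectivization.mk (KK n) v hv).rep = c • v := by
  obtain ⟨a, ha⟩ := Projectivization.exists_smul_eq_mk_rep (KK n) v hv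
  exact ⟨a, a.ne_zero, by rw [← ha, Units.smul_def]⟩

lemma mk_eq_mk_of_smul (v w : VV n) (hv : v ≠ 0) (hw : w ≠ 0) (c : KK n) (hc : c ≠ 0)
    (h : c • v = w) : Projectivization.mk (KK n) v hv = Projectivization.mk (KK n) w hw := by
  rw [Projectivization.mk_eq_mk_iff]
  refine ⟨(Units.mk0 c hc)⁻¹, ?_⟩
  subst h
  rw [Units.smul_def, smul_smul, Units.val_inv_eq_inv_val, Units.val_mk0,
    inv_mul_cancel₀ hc, one_smul]

lemma eq_of_rep_smul (x y : WPoint 2 n) (c : KK n) (h : y.rep = c • x.rep) : x = y := by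
  have hc : c ≠ 0 := by
    intro h0
    subst h0
    rw [zero_smul] at h
    exact y.rep_nonzero h
  have := mk_eq_mk_of_smul x.rep y.rep x.rep_nonzero y.rep_nonzero c hc h.symm
  rwa [Projectivization.mk_rep, Projectivization.mk_rep] at this

lemma rep_indep {x y : WPoint 2 n} (h : x ≠ y) :
    LinearIndependent (KK n) ![x.rep, y.rep] := by
  apply indep_pair x.rep_nonzero
  intro c hc
  exact h (eq_of_rep_smul x y c hc)

/-- the incidence graph -/
abbrev Gg (n : ℕ) : SimpleGraph (WPoint 2 n ⊕ WLine 2 n) := IncGraph (wIncid (p := 2) (n := n))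

lemma adj_pl {P : WPoint 2 n} {l : WLine 2 n} :
    (Gg n).Adj (Sum.inl P) (Sum.inr l) ↔ wIncid P l := by
  constructor
  · rintro (⟨p, l', h1, h2, h⟩ | ⟨p, l', h1, h2, h⟩)
    · rw [Sum.inl.injEq] at h1
      rw [Sum.inr.injEq] at h2
      subst h1; subst h2; exact h
    · exact absurd h1 (by simp)
  · intro h
    exact Or.inl ⟨P, l, rfl, rfl, h⟩

lemma adj_lp {P : WPoint 2 n} {l : WLine 2 n} :
    (Gg n).Adj (Sum.inr l) (Sum.inl P) ↔ wIncid P l := by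
  rw [(Gg n).adj_comm]
  exact adj_pl

lemma not_adj_pp (P Q : WPoint 2 n) : ¬ (Gg n).Adj (Sum.inl P) (Sum.inl Q) := by
  rintro (⟨p, l', h1, h2, h⟩ | ⟨p, l', h1, h2, h⟩)
  · exact absurd h2 (by simp)
  · exact absurd h1 (by simp)

lemma not_adj_ll (l m : WLine 2 n) : ¬ (Gg n).Adj (Sum.inr l) (Sum.inr m) := by
  rintro (⟨p, l', h1, h2, h⟩ | ⟨p, l', h1, h2, h⟩)
  · exact absurd h1 (by simp)
  · exact absurd h2 (by simp)

/-- the side of a vertex, as element of ZMod 2 -/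
def sd : WPoint 2 n ⊕ WLine 2 n → ZMod 2 := Sum.elim (fun _ => 0) (fun _ => 1)

lemma adj_sd {u v : WPoint 2 n ⊕ WLine 2 n} (h : (Gg n).Adj u v) : sd v = sd u + 1 := by
  rcases h with ⟨p, l', h1, h2, _⟩ | ⟨p, l', h1, h2, _⟩ <;> subst h1 <;> subst h2 <;>
    simp [sd] <;> decide

lemma walk_parity {u v : WPoint 2 n ⊕ WLine 2 n} (w : (Gg n).Walk u v) :
    (w.length : ZMod 2) = sd u + sd v := by
  induction w with
  | nil =>
    simp only [SimpleGraph.Walk.length_nil, Nat.cast_zero]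
    rw [eq_comm, ← CharTwo.add_self_eq_zero (sd _)]
  | cons h p ih =>
    rename_i a b c
    rw [SimpleGraph.Walk.length_cons]
    push_cast
    rw [ih, adj_sd h]
    have h2 : (2 : ZMod 2) = 0 := by decide
    linear_combination h2

lemma dist_parity {u v : WPoint 2 n ⊕ WLine 2 n} (hr : (Gg n).Reachable u v) :
    ((Gg n).dist u v : ZMod 2) = sd u + sd v := by
  obtain ⟨p, hp⟩ := hr.exists_walk_length_eq_dist
  rw [← hp, walk_parity]

lemma reach_pl (x : WPoint 2 n) (l : WLine 2 n) :
    (Gg n).Reachable (Sum.inl x) (Sum.inr l) := by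
  obtain ⟨z, hzl, hzne, hzp⟩ := exists_perp_in l.1 l.2.1 x.rep
  by_cases hin : x.rep ∈ l.1
  · exact ((adj_pl (n := n)).mpr hin).reachable
  · have hind : LinearIndependent (KK n) ![x.rep, z] := by
      apply indep_pair x.rep_nonzero
      intro c hc
      apply hin
      have hc0 : c ≠ 0 := by
        intro h0; subst h0; rw [zero_smul] at hc; exact hzne hc
      have : x.rep = c⁻¹ • z := by
        rw [hc, smul_smul, inv_mul_cancel₀ hc0, one_smul]
      rw [this]
      exact Submodule.smul_mem _ _ hzl
    have hiso : symp x.rep z = 0 := by rw [symp_comm]; exact hzp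
    set m := mkL x.rep z hind hiso with hm
    obtain ⟨c, hc0, hcr⟩ := rep_mk_smul z hzne
    have r1 : (Gg n).Adj (Sum.inl x) (Sum.inr m) := by
      rw [adj_pl]
      exact mem_mkL_left _ _ _ _
    have r2 : (Gg n).Adj (Sum.inr m) (Sum.inl (Projectivization.mk (KK n) z hzne)) := by
      rw [adj_lp]
      show (Projectivization.mk (KK n) z hzne).rep ∈ m.1
      rw [hcr]
      exact Submodule.smul_mem _ _ (mem_mkL_right _ _ _ _)
    have r3 : (Gg n).Adj (Sum.inl (Projectivization.mk (KK n) z hzne)) (Sum.inr l) := by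
      rw [adj_pl]
      show (Projectivization.mk (KK n) z hzne).rep ∈ l.1
      rw [hcr]
      exact Submodule.smul_mem _ _ hzl
    exact (r1.reachable.trans r2.reachable).trans r3.reachable

lemma indep_Ev13 : LinearIndependent (KK n) ![(Ev 1 : VV n), Ev 3] := by
  apply indep_pair (Ev_ne_zero 1)
  intro c hc
  have := congrFun hc 3
  simp [Ev] at this

def line0 : WLine 2 n :=
  mkL (Ev 1) (Ev 3) indep_Ev13 (by rw [symp_Ev3]; simp [Ev])

lemma preconn : (Gg n).Preconnected := by
  intro u v
  have l0 : WLine 2 n := line0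
  match u, v with
  | Sum.inl x, Sum.inl y => exact (reach_pl x l0).trans (reach_pl y l0).symm
  | Sum.inl x, Sum.inr l => exact reach_pl x l
  | Sum.inr l, Sum.inl x => exact (reach_pl x l).symm
  | Sum.inr l, Sum.inr m =>
    exact (reach_pl (Projectivization.mk (KK n) (Ev 1) (Ev_ne_zero 1)) l).symm.trans
      (reach_pl (Projectivization.mk (KK n) (Ev 1) (Ev_ne_zero 1)) m)

lemma dist_le_two {u m v : WPoint 2 n ⊕ WLine 2 n} (h1 : (Gg n).Adj u m)
    (h2 : (Gg n).Adj m v) : (Gg n).dist u v ≤ 2 := by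
  have := SimpleGraph.dist_le (SimpleGraph.Walk.cons h1 (SimpleGraph.Walk.cons h2
    SimpleGraph.Walk.nil))
  simpa using this

lemma common_of_dist_two {u v : WPoint 2 n ⊕ WLine 2 n} (h : (Gg n).dist u v = 2) :
    ∃ m, (Gg n).Adj u m ∧ (Gg n).Adj m v := by
  obtain ⟨p, hp⟩ := SimpleGraph.exists_walk_of_dist_ne_zero (G := Gg n) (u := u) (v := v)
    (by omega)
  rw [h] at hp
  match p, hp with
  | SimpleGraph.Walk.cons h1 (SimpleGraph.Walk.cons h2 SimpleGraph.Walk.nil), _ =>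
    exact ⟨_, h1, h2⟩

lemma dist_ge_three {u v : WPoint 2 n ⊕ WLine 2 n} (hne : u ≠ v)
    (hnadj : ¬ (Gg n).Adj u v)
    (hno2 : ∀ m, ¬ ((Gg n).Adj u m ∧ (Gg n).Adj m v)) : 3 ≤ (Gg n).dist u v := by
  have h0 : (Gg n).dist u v ≠ 0 := fun h => hne ((preconn u v).dist_eq_zero_iff.mp h)
  have h1 : (Gg n).dist u v ≠ 1 := fun h => hnadj (SimpleGraph.dist_eq_one_iff_adj.mp h)
  have h2 : (Gg n).dist u v ≠ 2 := by
    intro h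
    obtain ⟨m, hm⟩ := common_of_dist_two h
    exact hno2 m hm
  omega

/-! ### The resolving set: points on the sides of a quadrilateral, lines through the corners -/

lemma span_pair_comm (a b : VV n) : span (KK n) {a, b} = span (KK n) {b, a} := by
  rw [Set.pair_comm]

lemma span_pair_smul_right (a b : VV n) (c : KK n) (hc : c ≠ 0) :
    span (KK n) {a, c • b} = span (KK n) {a, b} := by
  apply le_antisymm
  · apply span_pair_le
    · exact Submodule.subset_span (Set.mem_insert _ _)
    · exact Submodule.smul_mem _ _ (Submodule.subset_span (Set.mem_insert_of_mem _ rfl))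
  · apply span_pair_le
    · exact Submodule.subset_span (Set.mem_insert _ _)
    · have hb : c⁻¹ • (c • b) ∈ span (KK n) {a, c • b} :=
        Submodule.smul_mem _ _ (Submodule.subset_span (Set.mem_insert_of_mem _ rfl))
      simpa [smul_smul, inv_mul_cancel₀ hc] using hb

/-- the point-part: vectors spanning the points on the four sides
`⟨e₀,e₂⟩, ⟨e₂,e₁⟩, ⟨e₁,e₃⟩, ⟨e₃,e₀⟩` of the quadrilateral -/
def fvec : Fin 4 × KK n → VV n := fun it =>
  match it.1 with
  | 0 => Ev 0 + it.2 • Ev 2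
  | 1 => Ev 2 + it.2 • Ev 1
  | 2 => Ev 1 + it.2 • Ev 3
  | 3 => Ev 3 + it.2 • Ev 0

lemma fvec_ne (it : Fin 4 × KK n) : fvec it ≠ 0 := by
  rcases it with ⟨i, t⟩
  fin_cases i <;> intro h
  · have := congrFun h 0; simp [fvec, Ev] at this
  · have := congrFun h 2; simp [fvec, Ev] at this
  · have := congrFun h 1; simp [fvec, Ev] at this
  · have := congrFun h 3; simp [fvec, Ev] at this

def fpt (it : Fin 4 × KK n) : WPoint 2 n :=
  Projectivization.mk (KK n) (fvec it) (fvec_ne it)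

def Tset (n : ℕ) : Set (WPoint 2 n) := Set.range fpt

lemma mem_T_of (v : VV n) (hv : v ≠ 0) (i : Fin 4) (t : KK n) (c : KK n) (hc : c ≠ 0)
    (h : c • v = fvec (i, t)) : Projectivization.mk (KK n) v hv ∈ Tset n :=
  ⟨(i, t), (mk_eq_mk_of_smul v (fvec (i, t)) hv (fvec_ne _) c hc h).symm⟩

lemma cov0 (v : VV n) (hv : v ≠ 0) (h1 : v 1 = 0) (h3 : v 3 = 0) :
    Projectivization.mk (KK n) v hv ∈ Tset n := by
  by_cases h0 : v 0 = 0
  · have h2 : v 2 ≠ 0 := by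
      intro h2
      exact hv (funext fun i => by fin_cases i <;> simp [h0, h1, h2, h3])
    apply mem_T_of v hv 1 0 (v 2)⁻¹ (inv_ne_zero h2)
    funext i
    fin_cases i <;> simp [fvec, Ev, h0, h1, h3, inv_mul_cancel₀ h2]
  · apply mem_T_of v hv 0 (v 2 / v 0) (v 0)⁻¹ (inv_ne_zero h0)
    funext i
    fin_cases i <;> simp [fvec, Ev, h1, h3, inv_mul_cancel₀ h0] <;> ring

lemma cov1 (v : VV n) (hv : v ≠ 0) (h0 : v 0 = 0) (h3 : v 3 = 0) :
    Projectivization.mk (KK n) v hv ∈ Tset n := by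
  by_cases h2 : v 2 = 0
  · have h1 : v 1 ≠ 0 := by
      intro h1
      exact hv (funext fun i => by fin_cases i <;> simp [h0, h1, h2, h3])
    apply mem_T_of v hv 2 0 (v 1)⁻¹ (inv_ne_zero h1)
    funext i
    fin_cases i <;> simp [fvec, Ev, h0, h2, h3, inv_mul_cancel₀ h1]
  · apply mem_T_of v hv 1 (v 1 / v 2) (v 2)⁻¹ (inv_ne_zero h2)
    funext i
    fin_cases i <;> simp [fvec, Ev, h0, h3, inv_mul_cancel₀ h2] <;> ring

lemma cov2 (v : VV n) (hv : v ≠ 0) (h0 : v 0 = 0) (h2 : v 2 = 0) :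
    Projectivization.mk (KK n) v hv ∈ Tset n := by
  by_cases h1 : v 1 = 0
  · have h3 : v 3 ≠ 0 := by
      intro h3
      exact hv (funext fun i => by fin_cases i <;> simp [h0, h1, h2, h3])
    apply mem_T_of v hv 3 0 (v 3)⁻¹ (inv_ne_zero h3)
    funext i
    fin_cases i <;> simp [fvec, Ev, h0, h1, h2, inv_mul_cancel₀ h3]
  · apply mem_T_of v hv 2 (v 3 / v 1) (v 1)⁻¹ (inv_ne_zero h1)
    funext i
    fin_cases i <;> simp [fvec, Ev, h0, h2, inv_mul_cancel₀ h1] <;> ring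

lemma cov3 (v : VV n) (hv : v ≠ 0) (h1 : v 1 = 0) (h2 : v 2 = 0) :
    Projectivization.mk (KK n) v hv ∈ Tset n := by
  by_cases h3 : v 3 = 0
  · have h0 : v 0 ≠ 0 := by
      intro h0
      exact hv (funext fun i => by fin_cases i <;> simp [h0, h1, h2, h3])
    apply mem_T_of v hv 0 0 (v 0)⁻¹ (inv_ne_zero h0)
    funext i
    fin_cases i <;> simp [fvec, Ev, h1, h2, h3, inv_mul_cancel₀ h0]
  · apply mem_T_of v hv 3 (v 0 / v 3) (v 3)⁻¹ (inv_ne_zero h3)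
    funext i
    fin_cases i <;> simp [fvec, Ev, h1, h2, inv_mul_cancel₀ h3] <;> ring

/-! ### the line part: all totally isotropic lines through a basis point -/

lemma indep_Ev_add (j k m : Fin 4) (s : KK n) (hjk : j ≠ k) (hjm : j ≠ m) (hkm : k ≠ m) :
    LinearIndependent (KK n) ![(Ev j : VV n), Ev k + s • Ev m] := by
  apply indep_pair (Ev_ne_zero j)
  intro c hc
  have := congrFun hc k
  simp [Ev, hjk.symm, hkm] at this

def gl : Fin 4 × KK n → WLine 2 n := fun is =>
  match is.1 with
  | 0 => mkL (Ev 0) (Ev 3 + is.2 • Ev 2)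
      (indep_Ev_add 0 3 2 is.2 (by decide) (by decide) (by decide))
      (by rw [symp_add_right, symp_smul_right, symp_Ev3, symp_Ev2]; simp [Ev])
  | 1 => mkL (Ev 1) (Ev 2 + is.2 • Ev 3)
      (indep_Ev_add 1 2 3 is.2 (by decide) (by decide) (by decide))
      (by rw [symp_add_right, symp_smul_right, symp_Ev2, symp_Ev3]; simp [Ev])
  | 2 => mkL (Ev 2) (Ev 0 + is.2 • Ev 1)
      (indep_Ev_add 2 0 1 is.2 (by decide) (by decide) (by decide))
      (by rw [symp_add_right, symp_smul_right, symp_Ev0, symp_Ev1]; simp [Ev])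
  | 3 => mkL (Ev 3) (Ev 1 + is.2 • Ev 0)
      (indep_Ev_add 3 1 0 is.2 (by decide) (by decide) (by decide))
      (by rw [symp_add_right, symp_smul_right, symp_Ev1, symp_Ev0]; simp [Ev])

def Uset (n : ℕ) : Set (WLine 2 n) := Set.range gl

lemma gl_carrier_0 (s : KK n) : (gl (0, s)).1 = span (KK n) {Ev 0, Ev 3 + s • Ev 2} := rfl
lemma gl_carrier_1 (s : KK n) : (gl (1, s)).1 = span (KK n) {Ev 1, Ev 2 + s • Ev 3} := rfl
lemma gl_carrier_2 (s : KK n) : (gl (2, s)).1 = span (KK n) {Ev 2, Ev 0 + s • Ev 1} := rfl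
lemma gl_carrier_3 (s : KK n) : (gl (3, s)).1 = span (KK n) {Ev 3, Ev 1 + s • Ev 0} := rfl

lemma wline_eq (l m : WLine 2 n) (h : l.1 = m.1) : l = m := Subtype.ext h

lemma umem_core (l : WLine 2 n) (j : Fin 4) (hj : Ev j ∈ l.1) :
    ∃ w : VV n, w ∈ l.1 ∧ w ≠ 0 ∧ w j = 0 ∧ symp w (Ev j) = 0 ∧
      l.1 = span (KK n) {Ev j, w} := by
  classical
  have hex : ∃ z' ∈ l.1, z' ∉ span (KK n) ({Ev j} : Set (VV n)) := by
    by_contra hcon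
    push_neg at hcon
    have hle : l.1 ≤ span (KK n) ({Ev j} : Set (VV n)) := hcon
    have h2 : (2 : ℕ) ≤ finrank (KK n) (span (KK n) ({Ev j} : Set (VV n))) :=
      le_trans (le_of_eq l.2.1.symm) (Submodule.finrank_mono hle)
    have h1 := finrank_span_singleton_le (n := n) (Ev j)
    omega
  obtain ⟨z', hz'l, hz'ns⟩ := hex
  have hz'v : (z' : VV n) = z' := rfl
  set w : VV n := z' - z' j • Ev j with hwdef
  have hwl : w ∈ l.1 := Submodule.sub_mem _ hz'l (Submodule.smul_mem _ _ hj)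
  have hwne : w ≠ 0 := by
    intro h0
    apply hz'ns
    rw [Submodule.mem_span_singleton]
    rw [hwdef, sub_eq_zero] at h0
    exact ⟨z' j, h0.symm⟩
  have hwj : w j = 0 := by
    rw [hwdef]
    simp [Ev]
  have hwp : symp w (Ev j) = 0 := by
    rw [symp_comm]
    exact l.2.2 _ hj _ hwl
  have hind : LinearIndependent (KK n) ![(Ev j : VV n), w] := by
    apply indep_pair (Ev_ne_zero j)
    intro c hc
    rcases eq_or_ne c 0 with rfl | hc0
    · rw [zero_smul] at hc; exact hwne hc
    · have := congrFun hc j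
      rw [hwj] at this
      simp [Ev] at this
      exact hc0 this.symm
  refine ⟨w, hwl, hwne, hwj, hwp, ?_⟩
  refine (Submodule.eq_of_le_of_finrank_le (span_pair_le hj hwl) ?_).symm
  rw [l.2.1, finrank_span_pair hind]

/-- every totally isotropic line through a basis point `e_j` belongs to `Uset` -/
lemma mem_U_of_0 (l : WLine 2 n) (hj : Ev 0 ∈ l.1) : l ∈ Uset n := by
  obtain ⟨w, hwl, hwne, hw0, hwp, hspan⟩ := umem_core l 0 hj
  rw [symp_Ev0] at hwp
  by_cases h3 : w 3 = 0
  · have h2 : w 2 ≠ 0 := by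
      intro h2; exact hwne (funext fun i => by fin_cases i <;> simp [hw0, hwp, h2, h3])
    refine ⟨(2, 0), ?_⟩
    apply wline_eq
    rw [gl_carrier_2, hspan]
    have hv : w = w 2 • Ev 2 := funext fun i => by fin_cases i <;> simp [Ev, hw0, hwp, h3]
    rw [hv, span_pair_smul_right _ _ _ h2, span_pair_comm]
    simp [Ev]
  · refine ⟨(0, w 2 / w 3), ?_⟩
    apply wline_eq
    rw [gl_carrier_0, hspan]
    have hv : Ev 3 + (w 2 / w 3) • Ev 2 = (w 3)⁻¹ • w := by
      funext i
      fin_cases i <;> simp [Ev, hw0, hwp, inv_mul_cancel₀ h3] <;> ring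
    rw [hv, span_pair_smul_right _ _ _ (inv_ne_zero h3)]

lemma mem_U_of_1 (l : WLine 2 n) (hj : Ev 1 ∈ l.1) : l ∈ Uset n := by
  obtain ⟨w, hwl, hwne, hw1, hwp, hspan⟩ := umem_core l 1 hj
  rw [symp_Ev1] at hwp
  by_cases h2 : w 2 = 0
  · have h3 : w 3 ≠ 0 := by
      intro h3; exact hwne (funext fun i => by fin_cases i <;> simp [hwp, hw1, h2, h3])
    refine ⟨(3, 0), ?_⟩
    apply wline_eq
    rw [gl_carrier_3, hspan]
    have hv : w = w 3 • Ev 3 := funext fun i => by fin_cases i <;> simp [Ev, hwp, hw1, h2]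
    rw [hv, span_pair_smul_right _ _ _ h3, span_pair_comm]
    simp [Ev]
  · refine ⟨(1, w 3 / w 2), ?_⟩
    apply wline_eq
    rw [gl_carrier_1, hspan]
    have hv : Ev 2 + (w 3 / w 2) • Ev 3 = (w 2)⁻¹ • w := by
      funext i
      fin_cases i <;> simp [Ev, hwp, hw1, inv_mul_cancel₀ h2] <;> ring
    rw [hv, span_pair_smul_right _ _ _ (inv_ne_zero h2)]

lemma mem_U_of_2 (l : WLine 2 n) (hj : Ev 2 ∈ l.1) : l ∈ Uset n := by
  obtain ⟨w, hwl, hwne, hw2, hwp, hspan⟩ := umem_core l 2 hj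
  rw [symp_Ev2] at hwp
  by_cases h0 : w 0 = 0
  · have h1 : w 1 ≠ 0 := by
      intro h1; exact hwne (funext fun i => by fin_cases i <;> simp [h0, h1, hw2, hwp])
    refine ⟨(1, 0), ?_⟩
    apply wline_eq
    rw [gl_carrier_1, hspan]
    have hv : w = w 1 • Ev 1 := funext fun i => by fin_cases i <;> simp [Ev, h0, hw2, hwp]
    rw [hv, span_pair_smul_right _ _ _ h1, span_pair_comm]
    simp [Ev]
  · refine ⟨(2, w 1 / w 0), ?_⟩
    apply wline_eq
    rw [gl_carrier_2, hspan]
    have hv : Ev 0 + (w 1 / w 0) • Ev 1 = (w 0)⁻¹ • w := by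
      funext i
      fin_cases i <;> simp [Ev, hw2, hwp, inv_mul_cancel₀ h0] <;> ring
    rw [hv, span_pair_smul_right _ _ _ (inv_ne_zero h0)]

lemma mem_U_of_3 (l : WLine 2 n) (hj : Ev 3 ∈ l.1) : l ∈ Uset n := by
  obtain ⟨w, hwl, hwne, hw3, hwp, hspan⟩ := umem_core l 3 hj
  rw [symp_Ev3] at hwp
  by_cases h1 : w 1 = 0
  · have h0 : w 0 ≠ 0 := by
      intro h0; exact hwne (funext fun i => by fin_cases i <;> simp [h0, h1, hwp, hw3])
    refine ⟨(0, 0), ?_⟩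
    apply wline_eq
    rw [gl_carrier_0, hspan]
    have hv : w = w 0 • Ev 0 := funext fun i => by fin_cases i <;> simp [Ev, h1, hwp, hw3]
    rw [hv, span_pair_smul_right _ _ _ h0, span_pair_comm]
    simp [Ev]
  · refine ⟨(3, w 0 / w 1), ?_⟩
    apply wline_eq
    rw [gl_carrier_3, hspan]
    have hv : Ev 1 + (w 0 / w 1) • Ev 0 = (w 1)⁻¹ • w := by
      funext i
      fin_cases i <;> simp [Ev, hwp, hw3, inv_mul_cancel₀ h1] <;> ring
    rw [hv, span_pair_smul_right _ _ _ (inv_ne_zero h1)]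

lemma mem_U_of (l : WLine 2 n) (j : Fin 4) (hj : Ev j ∈ l.1) : l ∈ Uset n := by
  fin_cases j
  · exact mem_U_of_0 l hj
  · exact mem_U_of_1 l hj
  · exact mem_U_of_2 l hj
  · exact mem_U_of_3 l hj

/-! ### the candidate resolving set -/

def Sset (n : ℕ) : Set (WPoint 2 n ⊕ WLine 2 n) :=
  (Sum.inl '' Tset n) ∪ (Sum.inr '' Uset n)

lemma memS_T {x : WPoint 2 n} (h : x ∈ Tset n) : Sum.inl x ∈ Sset n :=
  Or.inl ⟨x, h, rfl⟩

lemma memS_U {l : WLine 2 n} (h : l ∈ Uset n) : Sum.inr l ∈ Sset n :=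
  Or.inr ⟨l, h, rfl⟩

/-! ### distance computations -/

lemma dist_pp_le_two (x z : WPoint 2 n) (h : symp x.rep z.rep = 0) :
    (Gg n).dist (Sum.inl x) (Sum.inl z) ≤ 2 := by
  rcases eq_or_ne x z with rfl | hne
  · rw [SimpleGraph.dist_self]; omega
  · have hl := mkL x.rep z.rep (rep_indep hne) h
    refine dist_le_two (m := Sum.inr (mkL x.rep z.rep (rep_indep hne) h)) ?_ ?_
    · rw [adj_pl]
      exact mem_mkL_left _ _ _ _
    · rw [adj_lp]
      exact mem_mkL_right _ _ _ _

lemma dist_pp_ge_three (x z : WPoint 2 n) (h : symp x.rep z.rep ≠ 0) :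
    3 ≤ (Gg n).dist (Sum.inl x) (Sum.inl z) := by
  apply dist_ge_three
  · intro hxz
    rw [Sum.inl.injEq] at hxz
    subst hxz
    exact h (symp_self _)
  · exact not_adj_pp x z
  · rintro (⟨P⟩ | ⟨l⟩) ⟨h1, h2⟩
    · exact not_adj_pp x P h1
    · rw [adj_pl] at h1
      rw [adj_lp] at h2
      exact h (l.2.2 _ h1 _ h2)

/-- separate two points by a point of T perpendicular to one but not the other -/
lemma sep_pp_T (x y : WPoint 2 n) (z : VV n) (hz0 : z ≠ 0)
    (hT : Projectivization.mk (KK n) z hz0 ∈ Tset n)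
    (h1 : symp z x.rep = 0) (h2 : symp z y.rep ≠ 0) :
    ∃ s ∈ Sset n, (Gg n).dist (Sum.inl x) s ≠ (Gg n).dist (Sum.inl y) s := by
  refine ⟨Sum.inl (Projectivization.mk (KK n) z hz0), memS_T hT, ?_⟩
  obtain ⟨c, hc0, hcr⟩ := rep_mk_smul z hz0
  have hd1 : (Gg n).dist (Sum.inl x) (Sum.inl (Projectivization.mk (KK n) z hz0)) ≤ 2 := by
    apply dist_pp_le_two
    rw [hcr, symp_smul_right, symp_comm x.rep z, h1, mul_zero]
  have hd2 : 3 ≤ (Gg n).dist (Sum.inl y) (Sum.inl (Projectivization.mk (KK n) z hz0)) := by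
    apply dist_pp_ge_three
    intro hcon
    rw [hcr, symp_smul_right] at hcon
    rcases mul_eq_zero.mp hcon with hc | hs
    · exact hc0 hc
    · rw [symp_comm] at hs
      exact h2 hs
  omega

/-- solving a 2×2 system in char 2 -/
lemma solve2 (u v a b : VV n)
    (hd : symp u a * symp v b + symp v a * symp u b ≠ 0) :
    ∃ s t : KK n, symp (s • u + t • v) a = 0 ∧ symp (s • u + t • v) b = 1 := by
  set D := symp u a * symp v b + symp v a * symp u b with hD
  refine ⟨symp v a / D, symp u a / D, ?_, ?_⟩
  · rw [symp_add_left, symp_smul_left, symp_smul_left]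
    have : symp v a / D * symp u a + symp u a / D * symp v a
        = (symp u a * symp v a + symp u a * symp v a) / D := by ring
    rw [this, CharTwo.add_self_eq_zero, zero_div]
  · rw [symp_add_left, symp_smul_left, symp_smul_left]
    have : symp v a / D * symp u b + symp u a / D * symp v b = D / D := by
      rw [hD]; ring
    rw [this, div_self hd]

/-- the cross-product trick: a vector proportional to two independent ones is zero -/
lemma cross3 {u1 u2 v1 v2 w1 w2 : KK n} (huw : u1 * w2 + u2 * w1 = 0)
    (hvw : v1 * w2 + v2 * w1 = 0) (huv : u1 * v2 + u2 * v1 ≠ 0) :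
    w1 = 0 ∧ w2 = 0 := by
  have htwo : (2 : KK n) = 0 := CharTwo.two_eq_zero
  have hw1 : w1 = 0 := by
    have h : (u1 * v2 + u2 * v1) * w1 = 0 := by
      linear_combination u1 * hvw + v1 * huw - (u1 * v1 * w2) * htwo
    rcases mul_eq_zero.mp h with h | h
    · exact absurd h huv
    · exact h
  constructor
  · exact hw1
  · by_contra hw2
    rw [hw1] at huw hvw
    rw [mul_zero, add_zero] at huw hvw
    rcases mul_eq_zero.mp huw with h | h
    · rcases mul_eq_zero.mp hvw with h' | h'
      · rw [h, h'] at huv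
        simp at huv
      · exact hw2 h'
    · exact hw2 h

/-- separate two points by incidence with a U-line -/
lemma sep_pp_U (x y : WPoint 2 n) (lu : WLine 2 n) (hU : lu ∈ Uset n)
    (hx : wIncid x lu) (hy : ¬ wIncid y lu) :
    ∃ s ∈ Sset n, (Gg n).dist (Sum.inl x) s ≠ (Gg n).dist (Sum.inl y) s := by
  refine ⟨Sum.inr lu, memS_U hU, ?_⟩
  have hd1 : (Gg n).dist (Sum.inl x) (Sum.inr lu) = 1 := by
    rw [SimpleGraph.dist_eq_one_iff_adj, adj_pl]
    exact hx
  have hd2 : (Gg n).dist (Sum.inl y) (Sum.inr lu) ≠ 1 := by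
    intro h
    rw [SimpleGraph.dist_eq_one_iff_adj, adj_pl] at h
    exact hy h
  rw [hd1]
  exact fun h => hd2 h.symm

lemma dist_mixed_ne (x : WPoint 2 n) (l : WLine 2 n) (z : WPoint 2 n) :
    (Gg n).dist (Sum.inl x) (Sum.inl z) ≠ (Gg n).dist (Sum.inr l) (Sum.inl z) := by
  intro h
  have h1 := dist_parity (preconn (Sum.inl x) (Sum.inl z))
  have h2 := dist_parity (preconn (Sum.inr l) (Sum.inl z))
  rw [h] at h1
  rw [h1] at h2
  simp [sd] at h2

/-- mixed pairs are always separated -/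
lemma sep_mixed (x : WPoint 2 n) (l : WLine 2 n) :
    ∃ s ∈ Sset n, (Gg n).dist (Sum.inl x) s ≠ (Gg n).dist (Sum.inr l) s :=
  ⟨Sum.inl (fpt (0, 0)), memS_T ⟨(0, 0), rfl⟩, dist_mixed_ne x l (fpt (0, 0))⟩

/-! ### separation of point pairs -/

lemma symp_Evl0 (v : VV n) : symp (Ev 0) v = v 1 := by rw [symp_comm, symp_Ev0]
lemma symp_Evl1 (v : VV n) : symp (Ev 1) v = v 0 := by rw [symp_comm, symp_Ev1]
lemma symp_Evl2 (v : VV n) : symp (Ev 2) v = v 3 := by rw [symp_comm, symp_Ev2]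
lemma symp_Evl3 (v : VV n) : symp (Ev 3) v = v 2 := by rw [symp_comm, symp_Ev3]

/-- separation of a pair of points using a side of the quadrilateral -/
lemma sep_points_side (x y : WPoint 2 n) (u v : VV n)
    (hd : symp u x.rep * symp v y.rep + symp v x.rep * symp u y.rep ≠ 0)
    (hcov : ∀ (z : VV n) (hz : z ≠ 0), (∃ s t : KK n, s • u + t • v = z) →
      Projectivization.mk (KK n) z hz ∈ Tset n) :
    ∃ s ∈ Sset n, (Gg n).dist (Sum.inl x) s ≠ (Gg n).dist (Sum.inl y) s := by
  obtain ⟨s, t, h1, h2⟩ := solve2 u v x.rep y.rep hd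
  have hz0 : s • u + t • v ≠ 0 := by
    intro h0
    rw [h0, symp_zero_left] at h2
    exact one_ne_zero h2.symm
  exact sep_pp_T x y (s • u + t • v) hz0 (hcov _ hz0 ⟨s, t, rfl⟩) h1 (by rw [h2]; exact one_ne_zero)

lemma sep_points (x y : WPoint 2 n) (hne : x ≠ y) :
    ∃ s ∈ Sset n, (Gg n).dist (Sum.inl x) s ≠ (Gg n).dist (Sum.inl y) s := by
  set a := x.rep with ha
  set b := y.rep with hb
  by_cases hd1 : a 1 * b 3 + a 3 * b 1 ≠ 0
  · -- side (e0, e2)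
    apply sep_points_side x y (Ev 0) (Ev 2)
    · rw [symp_Evl0, symp_Evl2, symp_Evl2, symp_Evl0]
      exact hd1
    · intro z hz ⟨s, t, hst⟩
      apply cov0
      · rw [← hst]; simp [Ev]
      · rw [← hst]; simp [Ev]
  by_cases hd2 : a 3 * b 0 + a 0 * b 3 ≠ 0
  · -- side (e2, e1)
    apply sep_points_side x y (Ev 2) (Ev 1)
    · rw [symp_Evl2, symp_Evl1, symp_Evl1, symp_Evl2]
      exact hd2
    · intro z hz ⟨s, t, hst⟩
      apply cov1
      · rw [← hst]; simp [Ev]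
      · rw [← hst]; simp [Ev]
  by_cases hd3 : a 0 * b 2 + a 2 * b 0 ≠ 0
  · -- side (e1, e3)
    apply sep_points_side x y (Ev 1) (Ev 3)
    · rw [symp_Evl1, symp_Evl3, symp_Evl3, symp_Evl1]
      exact hd3
    · intro z hz ⟨s, t, hst⟩
      apply cov2
      · rw [← hst]; simp [Ev]
      · rw [← hst]; simp [Ev]
  by_cases hd4 : a 2 * b 1 + a 1 * b 2 ≠ 0
  · -- side (e3, e0)
    apply sep_points_side x y (Ev 3) (Ev 0)
    · rw [symp_Evl3, symp_Evl0, symp_Evl0, symp_Evl3]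
      exact hd4
    · intro z hz ⟨s, t, hst⟩
      apply cov3
      · rw [← hst]; simp [Ev]
      · rw [← hst]; simp [Ev]
  -- all four mixed determinants vanish
  push_neg at hd1 hd2 hd3 hd4
  by_cases h01 : a 0 * b 1 + a 1 * b 0 = 0
  · by_cases h23 : a 2 * b 3 + a 3 * b 2 = 0
    · -- a and b proportional: contradiction
      exfalso
      have hane : a ≠ 0 := x.rep_nonzero
      have htwo : (2 : KK n) = 0 := CharTwo.two_eq_zero
      have hprop : ∀ c : KK n, b = c • a → False := fun c hc =>
        hne (eq_of_rep_smul x y c (by rw [← ha, ← hb]; exact hc))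
      by_cases hk0 : a 0 ≠ 0
      · refine hprop (b 0 / a 0) (funext fun i => ?_)
        have e0 : b 0 = b 0 / a 0 * a 0 := by
          rw [div_mul_eq_mul_div, eq_div_iff hk0]
        have e1 : b 1 = b 0 / a 0 * a 1 := by
          rw [div_mul_eq_mul_div, eq_div_iff hk0]
          linear_combination h01 - (a 1 * b 0) * htwo
        have e2 : b 2 = b 0 / a 0 * a 2 := by
          rw [div_mul_eq_mul_div, eq_div_iff hk0]
          linear_combination hd3 - (a 2 * b 0) * htwo
        have e3 : b 3 = b 0 / a 0 * a 3 := by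
          rw [div_mul_eq_mul_div, eq_div_iff hk0]
          linear_combination hd2 - (a 3 * b 0) * htwo
        fin_cases i
        · exact e0
        · exact e1
        · exact e2
        · exact e3
      push_neg at hk0
      by_cases hk1 : a 1 ≠ 0
      · refine hprop (b 1 / a 1) (funext fun i => ?_)
        have e0 : b 0 = b 1 / a 1 * a 0 := by
          rw [div_mul_eq_mul_div, eq_div_iff hk1]
          linear_combination h01 - (a 0 * b 1) * htwo
        have e1 : b 1 = b 1 / a 1 * a 1 := by
          rw [div_mul_eq_mul_div, eq_div_iff hk1]
        have e2 : b 2 = b 1 / a 1 * a 2 := by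
          rw [div_mul_eq_mul_div, eq_div_iff hk1]
          linear_combination hd4 - (a 2 * b 1) * htwo
        have e3 : b 3 = b 1 / a 1 * a 3 := by
          rw [div_mul_eq_mul_div, eq_div_iff hk1]
          linear_combination hd1 - (a 3 * b 1) * htwo
        fin_cases i
        · exact e0
        · exact e1
        · exact e2
        · exact e3
      push_neg at hk1
      by_cases hk2 : a 2 ≠ 0
      · refine hprop (b 2 / a 2) (funext fun i => ?_)
        have e0 : b 0 = b 2 / a 2 * a 0 := by
          rw [div_mul_eq_mul_div, eq_div_iff hk2]
          linear_combination hd3 - (a 0 * b 2) * htwo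
        have e1 : b 1 = b 2 / a 2 * a 1 := by
          rw [div_mul_eq_mul_div, eq_div_iff hk2]
          linear_combination hd4 - (a 1 * b 2) * htwo
        have e2 : b 2 = b 2 / a 2 * a 2 := by
          rw [div_mul_eq_mul_div, eq_div_iff hk2]
        have e3 : b 3 = b 2 / a 2 * a 3 := by
          rw [div_mul_eq_mul_div, eq_div_iff hk2]
          linear_combination h23 - (a 3 * b 2) * htwo
        fin_cases i
        · exact e0
        · exact e1
        · exact e2
        · exact e3
      push_neg at hk2
      by_cases hk3 : a 3 ≠ 0
      · refine hprop (b 3 / a 3) (funext fun i => ?_)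
        have e0 : b 0 = b 3 / a 3 * a 0 := by
          rw [div_mul_eq_mul_div, eq_div_iff hk3]
          linear_combination hd2 - (a 0 * b 3) * htwo
        have e1 : b 1 = b 3 / a 3 * a 1 := by
          rw [div_mul_eq_mul_div, eq_div_iff hk3]
          linear_combination hd1 - (a 1 * b 3) * htwo
        have e2 : b 2 = b 3 / a 3 * a 2 := by
          rw [div_mul_eq_mul_div, eq_div_iff hk3]
          linear_combination h23 - (a 2 * b 3) * htwo
        have e3 : b 3 = b 3 / a 3 * a 3 := by
          rw [div_mul_eq_mul_div, eq_div_iff hk3]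
        fin_cases i
        · exact e0
        · exact e1
        · exact e2
        · exact e3
      push_neg at hk3
      exact hane (funext fun i => by fin_cases i <;> assumption)
    · -- columns 2,3 independent: a 0 = a 1 = b 0 = b 1 = 0, pattern D2
      have hc0 := cross3 (u1 := a 2) (u2 := b 2) (v1 := a 3) (v2 := b 3)
        (w1 := a 0) (w2 := b 0)
        (by linear_combination hd3) (by linear_combination hd2) (by
          intro h; exact h23 (by linear_combination h))
      have hc1 := cross3 (u1 := a 2) (u2 := b 2) (v1 := a 3) (v2 := b 3)
        (w1 := a 1) (w2 := b 1)
        (by linear_combination hd4) (by linear_combination hd1) (by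
          intro h; exact h23 (by linear_combination h))
      -- line through e0 and x
      have hiso : symp (Ev 0) a = 0 := by rw [symp_Evl0, hc1.1]
      have hindep : LinearIndependent (KK n) ![(Ev 0 : VV n), a] := by
        apply indep_pair (Ev_ne_zero 0)
        intro c hc
        apply x.rep_nonzero
        rw [← ha]
        funext i
        have h2c := congrFun hc 2
        have h3c := congrFun hc 3
        simp [Ev] at h2c h3c
        fin_cases i
        · exact hc0.1
        · exact hc1.1
        · exact h2c
        · exact h3c
      apply sep_pp_U x y (mkL (Ev 0) a hindep hiso)
      · exact mem_U_of_0 _ (mem_mkL_left _ _ _ _)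
      · show x.rep ∈ (mkL (Ev 0) a hindep hiso).1
        rw [← ha]
        exact mem_mkL_right _ _ _ _
      · show ¬ y.rep ∈ (mkL (Ev 0) a hindep hiso).1
        rw [← hb]
        intro hmem
        rw [mkL_carrier, Submodule.mem_span_pair] at hmem
        obtain ⟨s, t, hst⟩ := hmem
        have h0' := congrFun hst 0
        simp [Ev, hc0.1, hc0.2] at h0'
        subst h0'
        rw [zero_smul, zero_add] at hst
        exact hne (eq_of_rep_smul x y t (by rw [← ha, ← hb, ← hst]))
  · -- columns 0,1 independent: a 2 = a 3 = b 2 = b 3 = 0, pattern D1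
    have hc2 := cross3 (u1 := a 0) (u2 := b 0) (v1 := a 1) (v2 := b 1)
      (w1 := a 2) (w2 := b 2)
      (by linear_combination hd3) (by linear_combination hd4) (by
        intro h; exact h01 (by linear_combination h))
    have hc3 := cross3 (u1 := a 0) (u2 := b 0) (v1 := a 1) (v2 := b 1)
      (w1 := a 3) (w2 := b 3)
      (by linear_combination hd2) (by linear_combination hd1) (by
        intro h; exact h01 (by linear_combination h))
    have hiso : symp (Ev 2) a = 0 := by rw [symp_Evl2, hc3.1]
    have hindep : LinearIndependent (KK n) ![(Ev 2 : VV n), a] := by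
      apply indep_pair (Ev_ne_zero 2)
      intro c hc
      apply x.rep_nonzero
      rw [← ha]
      funext i
      have h0c := congrFun hc 0
      have h1c := congrFun hc 1
      simp [Ev] at h0c h1c
      fin_cases i
      · exact h0c
      · exact h1c
      · exact hc2.1
      · exact hc3.1
    apply sep_pp_U x y (mkL (Ev 2) a hindep hiso)
    · exact mem_U_of_2 _ (mem_mkL_left _ _ _ _)
    · show x.rep ∈ (mkL (Ev 2) a hindep hiso).1
      rw [← ha]
      exact mem_mkL_right _ _ _ _
    · show ¬ y.rep ∈ (mkL (Ev 2) a hindep hiso).1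
      rw [← hb]
      intro hmem
      rw [mkL_carrier, Submodule.mem_span_pair] at hmem
      obtain ⟨s, t, hst⟩ := hmem
      have h2' := congrFun hst 2
      simp [Ev, hc2.1, hc2.2] at h2'
      subst h2'
      rw [zero_smul, zero_add] at hst
      exact hne (eq_of_rep_smul x y t (by rw [← ha, ← hb, ← hst]))

/-! ### separation of line pairs -/

lemma symp_sub_right (x y z : VV n) : symp x (y - z) = symp x y - symp x z := by
  simp only [sympc, Pi.sub_apply]; ring

lemma smul_mem_cancel {W : Submodule (KK n) (VV n)} {c : KK n} {z : VV n}
    (hc : c ≠ 0) (h : c • z ∈ W) : z ∈ W := by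
  have := Submodule.smul_mem W c⁻¹ h
  rwa [smul_smul, inv_mul_cancel₀ hc, one_smul] at this

lemma dep_pair {a b : VV n} (ha : a ≠ 0) (h : ¬ LinearIndependent (KK n) ![a, b]) :
    ∃ d : KK n, b = d • a := by
  rw [LinearIndependent.pair_iff] at h
  push_neg at h
  obtain ⟨s, t, hst, hne'⟩ := h
  rcases eq_or_ne t 0 with rfl | ht
  · exfalso
    rw [zero_smul, add_zero, smul_eq_zero] at hst
    rcases hst with h' | h'
    · exact hne' h' rfl
    · exact ha h'
  · refine ⟨-s / t, ?_⟩
    have h' : t • b = (-s) • a := by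
      rw [neg_smul, ← eq_neg_of_add_eq_zero_right hst]
    calc b = t⁻¹ • (t • b) := by rw [smul_smul, inv_mul_cancel₀ ht, one_smul]
      _ = t⁻¹ • ((-s) • a) := by rw [h']
      _ = (-s / t) • a := by rw [smul_smul]; ring_nf

lemma span2_eq (y : WLine 2 n) (a b : VV n) (ha : a ∈ y.1) (hb : b ∈ y.1)
    (hind : LinearIndependent (KK n) ![a, b]) : y.1 = span (KK n) {a, b} :=
  (Submodule.eq_of_le_of_finrank_le (span_pair_le ha hb)
    (by rw [y.2.1, finrank_span_pair hind])).symm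

/-- separate two lines by a point of `T` lying on the first but not the second -/
lemma sep_lp_T (y1 y2 : WLine 2 n) (z : VV n) (hz0 : z ≠ 0) (hz1 : z ∈ y1.1)
    (hz2 : z ∉ y2.1) (hT : Projectivization.mk (KK n) z hz0 ∈ Tset n) :
    ∃ s ∈ Sset n, (Gg n).dist (Sum.inr y1) s ≠ (Gg n).dist (Sum.inr y2) s := by
  refine ⟨Sum.inl (Projectivization.mk (KK n) z hz0), memS_T hT, ?_⟩
  obtain ⟨c, hc0, hcr⟩ := rep_mk_smul z hz0
  have hd1 : (Gg n).dist (Sum.inr y1) (Sum.inl (Projectivization.mk (KK n) z hz0)) = 1 := by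
    rw [SimpleGraph.dist_eq_one_iff_adj, adj_lp]
    show (Projectivization.mk (KK n) z hz0).rep ∈ y1.1
    rw [hcr]
    exact Submodule.smul_mem _ _ hz1
  rw [hd1]
  intro h
  rw [eq_comm, SimpleGraph.dist_eq_one_iff_adj, adj_lp] at h
  apply hz2
  apply smul_mem_cancel hc0
  rw [← hcr]
  exact h

/-- separate two lines by a line of `U` meeting the first but disjoint from the second -/
lemma sep_ll_U (y1 y2 u : WLine 2 n) (hU : u ∈ Uset n) (z : VV n) (hz0 : z ≠ 0)
    (hzu : z ∈ u.1) (hzy1 : z ∈ y1.1)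
    (hmiss : ∀ c, c ∈ u.1 → c ∈ y2.1 → c = 0) :
    ∃ s ∈ Sset n, (Gg n).dist (Sum.inr y1) s ≠ (Gg n).dist (Sum.inr y2) s := by
  refine ⟨Sum.inr u, memS_U hU, ?_⟩
  obtain ⟨c, hc0, hcr⟩ := rep_mk_smul z hz0
  have hd1 : (Gg n).dist (Sum.inr y1) (Sum.inr u) ≤ 2 := by
    refine dist_le_two (m := Sum.inl (Projectivization.mk (KK n) z hz0)) ?_ ?_
    · rw [adj_lp]
      show (Projectivization.mk (KK n) z hz0).rep ∈ y1.1
      rw [hcr]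
      exact Submodule.smul_mem _ _ hzy1
    · rw [adj_pl]
      show (Projectivization.mk (KK n) z hz0).rep ∈ u.1
      rw [hcr]
      exact Submodule.smul_mem _ _ hzu
  have hd2 : 3 ≤ (Gg n).dist (Sum.inr y2) (Sum.inr u) := by
    apply dist_ge_three
    · intro heq
      rw [Sum.inr.injEq] at heq
      subst heq
      exact hz0 (hmiss z hzu hzu)
    · exact not_adj_ll y2 u
    · rintro (⟨P⟩ | ⟨l⟩) ⟨h1, h2⟩
      · rw [adj_lp] at h1
        rw [adj_pl] at h2
        exact P.rep_nonzero (hmiss P.rep h2 h1)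
      · exact not_adj_ll y2 l h1
  omega

/-- case A: a basis point on one line but not on the other -/
lemma sepA (y1 y2 : WLine 2 n) (j : Fin 4) (hj1 : Ev j ∈ y1.1) (hj2 : Ev j ∉ y2.1) :
    ∃ s ∈ Sset n, (Gg n).dist (Sum.inr y1) s ≠ (Gg n).dist (Sum.inr y2) s := by
  classical
  obtain ⟨w, hwy2, hw0, hwperp⟩ := exists_perp_in y2.1 y2.2.1 (Ev j)
  have hO : finrank (KK n) ((B n).orthogonal (span (KK n) ({Ev j} : Set (VV n)))) = 3 := by
    rw [finrank_orth, finrank_span_singleton (Ev_ne_zero j)]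
  have hzex : ∃ z ∈ (B n).orthogonal (span (KK n) ({Ev j} : Set (VV n))),
      z ∉ span (KK n) {Ev j, w} := by
    by_contra hcon
    push_neg at hcon
    have hle : (B n).orthogonal (span (KK n) ({Ev j} : Set (VV n))) ≤
        span (KK n) {Ev j, w} := hcon
    have h1 := Submodule.finrank_mono (R := KK n) hle
    rw [hO] at h1
    have h2 := finrank_span_pair_le (n := n) (Ev j) w
    omega
  obtain ⟨z, hzO, hznotin⟩ := hzex
  have hzperp : symp (Ev j) z = 0 := by
    have := (LinearMap.BilinForm.mem_orthogonal_iff.mp hzO) (Ev j)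
      (Submodule.mem_span_singleton_self _)
    exact this
  have hb : ∀ c : KK n, z ≠ c • Ev j := by
    intro c hc
    apply hznotin
    rw [hc]
    exact Submodule.smul_mem _ _ (Submodule.subset_span (Set.mem_insert _ _))
  have hind := indep_pair (Ev_ne_zero j) hb
  set u := mkL (Ev j) z hind hzperp with hu
  apply sep_ll_U y1 y2 u (mem_U_of u j (mem_mkL_left _ _ _ _)) (Ev j) (Ev_ne_zero j)
    (mem_mkL_left _ _ _ _) hj1
  intro c hcu hcy2
  have hcperp : symp (Ev j) c = 0 := u.2.2 (Ev j) (mem_mkL_left _ _ _ _) c hcu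
  have hdep : ∃ d : KK n, c = d • w := by
    by_cases hind2 : LinearIndependent (KK n) ![w, c]
    · exfalso
      apply hj2
      apply mem_of_perp_all y2.1 y2.2.1 y2.2.2 (Ev j)
      intro x hx
      rw [span2_eq y2 w c hwy2 hcy2 hind2, Submodule.mem_span_pair] at hx
      obtain ⟨s, t, rfl⟩ := hx
      rw [symp_add_left, symp_smul_left, symp_smul_left, hwperp, symp_comm c (Ev j), hcperp]
      ring
    · exact dep_pair hw0 hind2
  obtain ⟨d, hd⟩ := hdep
  rw [hu, mkL_carrier, Submodule.mem_span_pair] at hcu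
  obtain ⟨α, β, hαβ⟩ := hcu
  by_cases hβ : β = 0
  · subst hβ
    rw [zero_smul, add_zero] at hαβ
    by_cases hα : α = 0
    · rw [← hαβ, hα, zero_smul]
    · exfalso
      apply hj2
      have : Ev j = α⁻¹ • c := by
        rw [← hαβ, smul_smul, inv_mul_cancel₀ hα, one_smul]
      rw [this]
      exact Submodule.smul_mem _ _ hcy2
  · exfalso
    apply hznotin
    rw [Submodule.mem_span_pair]
    refine ⟨-(α / β), d / β, ?_⟩
    apply smul_right_injective (VV n) hβ
    show β • (-(α / β) • Ev j + (d / β) • w) = β • z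
    rw [smul_add, smul_smul, smul_smul]
    have e1 : β * -(α / β) = -α := by field_simp [mul_comm]
    have e2 : β * (d / β) = d := by field_simp
    rw [e1, e2]
    have e3 : β • z = c - α • Ev j := by
      rw [← hαβ]; module
    rw [e3, hd]
    module

/-- the concurrent case of line separation -/
lemma sep_lines (y1 y2 : WLine 2 n) (hne : y1 ≠ y2) :
    ∃ s ∈ Sset n, (Gg n).dist (Sum.inr y1) s ≠ (Gg n).dist (Sum.inr y2) s := by
  classical
  by_cases hP : ∃ P : VV n, P ≠ 0 ∧ P ∈ y1.1 ∧ P ∈ y2.1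
  · -- concurrent lines
    obtain ⟨P, hP0, hPy1, hPy2⟩ := hP
    have hjex : ∃ j : Fin 4, symp P (Ev j) ≠ 0 := by
      by_contra hall
      push_neg at hall
      apply hP0
      funext i
      fin_cases i
      · have := hall 1; rwa [symp_Ev1] at this
      · have := hall 0; rwa [symp_Ev0] at this
      · have := hall 3; rwa [symp_Ev3] at this
      · have := hall 2; rwa [symp_Ev2] at this
    obtain ⟨j, hj⟩ := hjex
    by_cases hj1 : Ev j ∈ y1.1
    · by_cases hj2 : Ev j ∈ y2.1
      · exfalso
        exact hj (y1.2.2 P hPy1 (Ev j) hj1)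
      · exact sepA y1 y2 j hj1 hj2
    · by_cases hj2 : Ev j ∈ y2.1
      · obtain ⟨s, hs, hd⟩ := sepA y2 y1 j hj2 hj1
        exact ⟨s, hs, hd.symm⟩
      · -- e_j off both lines; the projection misses y2 thanks to P
        obtain ⟨z, hzy1, hz0, hzperp⟩ := exists_perp_in y1.1 y1.2.1 (Ev j)
        have hb : ∀ c : KK n, z ≠ c • Ev j := by
          intro c hc
          apply hj1
          have hc0 : c ≠ 0 := by
            intro h0; subst h0; rw [zero_smul] at hc; exact hz0 hc
          have : Ev j = c⁻¹ • z := by rw [hc, smul_smul, inv_mul_cancel₀ hc0, one_smul]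
          rw [this]
          exact Submodule.smul_mem _ _ hzy1
        have hind := indep_pair (Ev_ne_zero j) hb
        have hiso : symp (Ev j) z = 0 := by rw [symp_comm]; exact hzperp
        apply sep_ll_U y1 y2 (mkL (Ev j) z hind hiso)
          (mem_U_of _ j (mem_mkL_left _ _ _ _)) z hz0 (mem_mkL_right _ _ _ _) hzy1
        intro c hcu hcy2
        rw [mkL_carrier, Submodule.mem_span_pair] at hcu
        obtain ⟨α, β, hαβ⟩ := hcu
        have h1 : symp c P = 0 := y2.2.2 c hcy2 P hPy2
        have h2 : symp z P = 0 := y1.2.2 z hzy1 P hPy1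
        rw [← hαβ, symp_add_left, symp_smul_left, symp_smul_left, h2, mul_zero, add_zero] at h1
        have hα : α = 0 := by
          rcases mul_eq_zero.mp h1 with h | h
          · exact h
          · exact absurd h (by rw [symp_comm]; exact hj)
        subst hα
        rw [zero_smul, zero_add] at hαβ
        by_cases hβ : β = 0
        · rw [← hαβ, hβ, zero_smul]
        · exfalso
          have hzy2 : z ∈ y2.1 := by
            apply smul_mem_cancel hβ
            rw [hαβ]
            exact hcy2
          -- z ∈ y1 ∩ y2, and P too; they must be dependent, contradicting symp z (Ev j) = 0
          by_cases hind2 : LinearIndependent (KK n) ![P, z]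
          · apply hne
            apply wline_eq
            rw [span2_eq y1 P z hPy1 hzy1 hind2, span2_eq y2 P z hPy2 hzy2 hind2]
          · obtain ⟨d, hdz⟩ := dep_pair hP0 hind2
            have hd0 : d ≠ 0 := by
              intro h0; subst h0; rw [zero_smul] at hdz; exact hz0 hdz
            apply hj
            have h5 := hzperp
            rw [hdz, symp_smul_left] at h5
            rcases mul_eq_zero.mp h5 with h | h
            · exact absurd h hd0
            · exact h
  · -- disjoint (skew) lines
    push_neg at hP
    have hbot : ∀ c : VV n, c ∈ y1.1 → c ∈ y2.1 → c = 0 := by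
      intro c h1 h2
      by_contra hc
      exact (hP c hc h1) h2
    -- if some basis point lies on one of the lines, use case A
    by_cases hjex : ∃ j : Fin 4, Ev j ∈ y1.1 ∨ Ev j ∈ y2.1
    · obtain ⟨j, hc⟩ := hjex
      rcases hc with hj1 | hj2
      · have hj2 : Ev j ∉ y2.1 := fun h => Ev_ne_zero j (hbot _ hj1 h)
        exact sepA y1 y2 j hj1 hj2
      · have hj1 : Ev j ∉ y1.1 := fun h => Ev_ne_zero j (hbot _ h hj2)
        obtain ⟨s, hs, hd⟩ := sepA y2 y1 j hj2 hj1
        exact ⟨s, hs, hd.symm⟩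
    · push_neg at hjex
      by_cases hsep : ∃ s ∈ Sset n,
        (Gg n).dist (Sum.inr y1) s ≠ (Gg n).dist (Sum.inr y2) s
      · exact hsep
      exfalso
      -- decompose the basis along y1 ⊕ y2
      have hinf : y1.1 ⊓ y2.1 = ⊥ := by
        rw [Submodule.eq_bot_iff]
        intro c hc
        exact hbot c hc.1 hc.2
      have hsup : y1.1 ⊔ y2.1 = ⊤ := by
        apply Submodule.eq_top_of_finrank_eq
        have h1 := Submodule.finrank_sup_add_finrank_inf_eq y1.1 y2.1
        rw [hinf, finrank_bot, y1.2.1, y2.2.1] at h1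
        rw [finrank_VV]
        omega
      have hdec : ∀ j : Fin 4, ∃ p ∈ y1.1, ∃ q ∈ y2.1, p + q = Ev j := by
        intro j
        have : Ev j ∈ y1.1 ⊔ y2.1 := by rw [hsup]; exact Submodule.mem_top
        exact Submodule.mem_sup.mp this
      choose pf hp qf hq hsum using hdec
      -- each diagonal symplectic product must vanish, else we could separate
      have hQzero : ∀ j : Fin 4, symp (pf j) (qf j) = 0 := by
        intro j
        by_contra hpq
        obtain ⟨z, hzy1, hz0, hzperp⟩ := exists_perp_in y1.1 y1.2.1 (Ev j)
        have hb : ∀ c : KK n, z ≠ c • Ev j := by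
          intro c hc
          apply hjex j |>.1
          have hc0 : c ≠ 0 := by
            intro h0; subst h0; rw [zero_smul] at hc; exact hz0 hc
          have : Ev j = c⁻¹ • z := by rw [hc, smul_smul, inv_mul_cancel₀ hc0, one_smul]
          rw [this]
          exact Submodule.smul_mem _ _ hzy1
        have hind := indep_pair (Ev_ne_zero j) hb
        have hiso : symp (Ev j) z = 0 := by rw [symp_comm]; exact hzperp
        apply hsep
        apply sep_ll_U y1 y2 (mkL (Ev j) z hind hiso)
          (mem_U_of _ j (mem_mkL_left _ _ _ _)) z hz0 (mem_mkL_right _ _ _ _) hzy1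
        intro c hcu hcy2
        rw [mkL_carrier, Submodule.mem_span_pair] at hcu
        obtain ⟨α, β, hαβ⟩ := hcu
        have h1 : symp c (qf j) = 0 := y2.2.2 c hcy2 (qf j) (hq j)
        have hq' : qf j = Ev j - pf j := by
          rw [← hsum j]; abel
        have h2 : symp z (qf j) = 0 := by
          rw [hq', symp_sub_right, hzperp, y1.2.2 z hzy1 (pf j) (hp j), sub_zero]
        have h3 : symp (Ev j) (qf j) ≠ 0 := by
          rw [← hsum j, symp_add_left, symp_self, add_zero]
          exact hpq
        rw [← hαβ, symp_add_left, symp_smul_left, symp_smul_left, h2, mul_zero,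
          add_zero] at h1
        have hα : α = 0 := by
          rcases mul_eq_zero.mp h1 with h | h
          · exact h
          · exact absurd h h3
        subst hα
        rw [zero_smul, zero_add] at hαβ
        by_cases hβ : β = 0
        · rw [← hαβ, hβ, zero_smul]
        · exfalso
          apply hz0
          apply hbot z hzy1
          apply smul_mem_cancel hβ
          rw [hαβ]
          exact hcy2
      -- hence y1 lies on the hyperbolic quadric x0x1 + x2x3 = 0
      have hquad : ∀ w ∈ y1.1, w 0 * w 1 + w 2 * w 3 = 0 := by
        intro w hw
        have hpw : w 0 • pf 0 + w 1 • pf 1 + w 2 • pf 2 + w 3 • pf 3 ∈ y1.1 := by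
          refine Submodule.add_mem _ (Submodule.add_mem _ (Submodule.add_mem _ ?_ ?_) ?_) ?_ <;>
            exact Submodule.smul_mem _ _ (hp _)
        have hqw : w 0 • qf 0 + w 1 • qf 1 + w 2 • qf 2 + w 3 • qf 3 ∈ y2.1 := by
          refine Submodule.add_mem _ (Submodule.add_mem _ (Submodule.add_mem _ ?_ ?_) ?_) ?_ <;>
            exact Submodule.smul_mem _ _ (hq _)
        have hsum' : (w 0 • pf 0 + w 1 • pf 1 + w 2 • pf 2 + w 3 • pf 3)
            + (w 0 • qf 0 + w 1 • qf 1 + w 2 • qf 2 + w 3 • qf 3)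
            = w 0 • Ev 0 + w 1 • Ev 1 + w 2 • Ev 2 + w 3 • Ev 3 := by
          rw [← hsum 0, ← hsum 1, ← hsum 2, ← hsum 3]
          module
        have hsum'' : (w 0 • pf 0 + w 1 • pf 1 + w 2 • pf 2 + w 3 • pf 3)
            + (w 0 • qf 0 + w 1 • qf 1 + w 2 • qf 2 + w 3 • qf 3) = w := by
          rw [hsum']
          exact (vec_decomp w).symm
        have hqw0 : w 0 • qf 0 + w 1 • qf 1 + w 2 • qf 2 + w 3 • qf 3 = 0 := by
          apply hbot _ _ hqw
          have hq_eq : w 0 • qf 0 + w 1 • qf 1 + w 2 • qf 2 + w 3 • qf 3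
              = w - (w 0 • pf 0 + w 1 • pf 1 + w 2 • pf 2 + w 3 • pf 3) :=
            eq_sub_of_add_eq' hsum''
          rw [hq_eq]
          exact Submodule.sub_mem _ hw hpw
        have hX : symp (w 0 • pf 0 + w 1 • pf 1 + w 2 • pf 2 + w 3 • pf 3)
            (w 0 • qf 0 + w 1 • qf 1 + w 2 • qf 2 + w 3 • qf 3) = 0 := by
          rw [hqw0, symp_zero_right]
        simp only [symp_add_left, symp_add_right, symp_smul_left, symp_smul_right] at hX
        have hEE : ∀ i j : Fin 4, symp (pf i) (qf j) + symp (pf j) (qf i)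
            = symp (Ev i) (Ev j) := by
          intro i j
          have h1 := y1.2.2 (pf i) (hp i) (pf j) (hp j)
          have h2 := y2.2.2 (qf i) (hq i) (qf j) (hq j)
          rw [← hsum i, ← hsum j, symp_add_left, symp_add_right, symp_add_right, h1, h2,
            symp_comm (qf i) (pf j)]
          ring
        have E01 : symp (pf 0) (qf 1) + symp (pf 1) (qf 0) = 1 :=
          (hEE 0 1).trans (by rw [symp_Ev1]; simp [Ev])
        have E23 : symp (pf 2) (qf 3) + symp (pf 3) (qf 2) = 1 :=
          (hEE 2 3).trans (by rw [symp_Ev3]; simp [Ev])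
        have E02 : symp (pf 0) (qf 2) + symp (pf 2) (qf 0) = 0 :=
          (hEE 0 2).trans (by rw [symp_Ev2]; simp [Ev])
        have E03 : symp (pf 0) (qf 3) + symp (pf 3) (qf 0) = 0 :=
          (hEE 0 3).trans (by rw [symp_Ev3]; simp [Ev])
        have E12 : symp (pf 1) (qf 2) + symp (pf 2) (qf 1) = 0 :=
          (hEE 1 2).trans (by rw [symp_Ev2]; simp [Ev])
        have E13 : symp (pf 1) (qf 3) + symp (pf 3) (qf 1) = 0 :=
          (hEE 1 3).trans (by rw [symp_Ev3]; simp [Ev])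
        linear_combination hX - (w 0 * w 1) * E01 - (w 0 * w 2) * E02 - (w 0 * w 3) * E03
          - (w 1 * w 2) * E12 - (w 1 * w 3) * E13 - (w 2 * w 3) * E23
          - (w 0 * w 0) * (hQzero 0) - (w 1 * w 1) * (hQzero 1)
          - (w 2 * w 2) * (hQzero 2) - (w 3 * w 3) * (hQzero 3)
      -- extract a point of y1 lying on a side of the quadrilateral
      apply hsep
      set φ : y1.1 →ₗ[KK n] KK n × KK n :=
        ((LinearMap.proj (1 : Fin 4)).comp y1.1.subtype).prod
          ((LinearMap.proj (3 : Fin 4)).comp y1.1.subtype) with hφ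
      by_cases hker : LinearMap.ker φ = ⊥
      · have h1 := LinearMap.finrank_range_add_finrank_ker φ
        rw [hker, finrank_bot, add_zero, y1.2.1] at h1
        have hrange : LinearMap.range φ = ⊤ := by
          apply Submodule.eq_top_of_finrank_eq
          rw [h1, Module.finrank_prod, Module.finrank_self]
        have hmem : ((1 : KK n), (0 : KK n)) ∈ LinearMap.range φ := by
          rw [hrange]; exact Submodule.mem_top
        obtain ⟨wv, hwv⟩ := hmem
        have hv1 : (wv : VV n) 1 = 1 := by
          have := congrArg Prod.fst hwv
          simpa [hφ] using this
        have hv3 : (wv : VV n) 3 = 0 := by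
          have := congrArg Prod.snd hwv
          simpa [hφ] using this
        have hv0 : (wv : VV n) 0 = 0 := by
          have := hquad (wv : VV n) wv.2
          rwa [hv1, hv3, mul_one, mul_zero, add_zero] at this
        have hvne : (wv : VV n) ≠ 0 := by
          intro h0
          have := congrFun h0 1
          rw [hv1] at this
          exact one_ne_zero this
        have hvy2 : (wv : VV n) ∉ y2.1 := fun h => hvne (hbot _ wv.2 h)
        exact sep_lp_T y1 y2 (wv : VV n) hvne wv.2 hvy2 (cov1 _ hvne hv0 hv3)
      · obtain ⟨zz, hzker, hzne⟩ := Submodule.exists_mem_ne_zero_of_ne_bot hker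
        have hv1 : (zz : VV n) 1 = 0 := by
          have h0 : φ zz = 0 := hzker
          have := congrArg Prod.fst h0
          simpa [hφ] using this
        have hv3 : (zz : VV n) 3 = 0 := by
          have h0 : φ zz = 0 := hzker
          have := congrArg Prod.snd h0
          simpa [hφ] using this
        have hvne : (zz : VV n) ≠ 0 := by
          intro h0
          apply hzne
          exact Subtype.ext h0
        have hvy2 : (zz : VV n) ∉ y2.1 := fun h => hvne (hbot _ zz.2 h)
        exact sep_lp_T y1 y2 (zz : VV n) hvne zz.2 hvy2 (cov0 _ hvne hv1 hv3)

/-! ### cardinality of the resolving set -/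

instance : Finite (WPoint 2 n) := Quotient.finite _

instance : Finite (Submodule (KK n) (VV n)) :=
  Finite.of_injective (fun W => (W : Set (VV n))) SetLike.coe_injective

instance : Finite (WLine 2 n) := Subtype.finite

lemma range_ncard_le {α β : Type*} [Finite α] (f : α → β) :
    (Set.range f).ncard ≤ Nat.card α := by
  rw [← Set.image_univ]
  exact (Set.ncard_image_le (Set.toFinite _)).trans (le_of_eq (Set.ncard_univ _))

lemma Sset_card (hn : n ≠ 0) : (Sset n).ncard ≤ 8 * 2 ^ n := by
  have hcard : Nat.card (Fin 4 × KK n) = 4 * 2 ^ n := by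
    rw [Nat.card_prod, Nat.card_eq_fintype_card, Fintype.card_fin, GaloisField.card 2 n hn]
  have hT : (Sum.inl '' Tset n : Set (WPoint 2 n ⊕ WLine 2 n)).ncard ≤ 4 * 2 ^ n := by
    refine (Set.ncard_image_le (Set.toFinite _)).trans ?_
    rw [← hcard]
    exact range_ncard_le fpt
  have hU : (Sum.inr '' Uset n : Set (WPoint 2 n ⊕ WLine 2 n)).ncard ≤ 4 * 2 ^ n := by
    refine (Set.ncard_image_le (Set.toFinite _)).trans ?_
    rw [← hcard]
    exact range_ncard_le gl
  calc (Sset n).ncard ≤ (Sum.inl '' Tset n : Set (WPoint 2 n ⊕ WLine 2 n)).ncard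
        + (Sum.inr '' Uset n : Set (WPoint 2 n ⊕ WLine 2 n)).ncard := Set.ncard_union_le _ _
    _ ≤ 8 * 2 ^ n := by omega

end WqAux

/-- If `q = p^n` is even then the metric dimension of the generalized quadrangle `W(q)`
is at most `8q`: there is a resolving set of its incidence graph of size at most `8q`. -/
theorem wq_metric_dimension_upper (p n : ℕ) [Fact p.Prime] (hn : 0 < n)
    (heven : Even (p ^ n)) :
    ∃ S : Set (WPoint p n ⊕ WLine p n),
      IsResolvingSet (IncGraph (wIncid (p := p) (n := n))) S ∧ S.ncard ≤ 8 * p ^ n := by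
  have hp : p = 2 := by
    have h1 : Even p := (Nat.even_pow.mp heven).1
    exact ((Fact.out : p.Prime).even_iff).mp h1
  subst hp
  refine ⟨WqAux.Sset n, ?_, WqAux.Sset_card hn.ne'⟩
  intro x y h
  by_contra hxy
  have hsep : ∃ s ∈ WqAux.Sset n,
      (WqAux.Gg n).dist x s ≠ (WqAux.Gg n).dist y s := by
    match x, y with
    | Sum.inl a, Sum.inl b =>
      exact WqAux.sep_points a b (fun hab => hxy (by rw [hab]))
    | Sum.inl a, Sum.inr b => exact WqAux.sep_mixed a b
    | Sum.inr a, Sum.inl b =>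
      obtain ⟨s, hs, hd⟩ := WqAux.sep_mixed b a
      exact ⟨s, hs, hd.symm⟩
    | Sum.inr a, Sum.inr b =>
      exact WqAux.sep_lines a b (fun hab => hxy (by rw [hab]))
  obtain ⟨s, hs, hd⟩ := hsep
  exact hd (h s hs)

end
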